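/- Let Y be a compact Hausdorff space, S ⊆ Y a finite set, and X ⊆ Y \ S a set that is closed in the subspace Y \ S. Let K be a connected component of X whose closure in Y does not meet S. Then there exists an open set V ⊆ Y with K ⊆ V, the closure of V in Y disjoint from S, and the boundary of V (in Y \ S) disjoint from X. -/

import Mathlib

open Set

/-- In a compact Hausdorff space, if the connected component of `x` is contained in an open
set `U`, then there is a clopen set containing `x` inside `U`. -/
lemma exists_isClopen_subset_of_connectedComponent_subset {α : Type*} [TopologicalSpace α]
    [CompactSpace α] [T2Space α] {x : α} {U : Set α} (hU : IsOpen U)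
    (h : connectedComponent x ⊆ U) :
    ∃ V : Set α, IsClopen V ∧ x ∈ V ∧ V ⊆ U := by
  have hUc : IsCompact Uᶜ := hU.isClosed_compl.isCompact
  have hempty : Uᶜ ∩ ⋂ Z : {Z : Set α // IsClopen Z ∧ x ∈ Z}, (Z : Set α) = ∅ := by
    rw [← connectedComponent_eq_iInter_isClopen x]
    exact Set.eq_empty_of_forall_notMem fun y ⟨hy1, hy2⟩ => hy1 (h hy2)
  obtain ⟨t, ht⟩ := hUc.elim_finite_subfamily_closed _ (fun Z => Z.2.1.isClosed) hempty
  refine ⟨⋂ Z ∈ t, (Z : Set α), t.finite_toSet.isClopen_biInter (fun Z _ => Z.2.1),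
    Set.mem_iInter₂.mpr fun Z _ => Z.2.2, ?_⟩
  intro y hy
  by_contra hyU
  exact Set.notMem_empty y (ht ▸ ⟨hyU, hy⟩)

theorem separate_bounded_component {Y : Type*} [TopologicalSpace Y]
    [CompactSpace Y] [T2Space Y] (S : Set Y) (hS : S.Finite)
    (X : Set Y) (hXS : X ⊆ Sᶜ)
    (hXclosed : IsClosed ((Subtype.val ⁻¹' X) : Set (Sᶜ : Set Y)))
    (K : Set Y) (x : Y) (hx : x ∈ X) (hK : K = connectedComponentIn X x)
    (hKS : Disjoint (closure K) S) :
    ∃ V : Set Y, IsOpen V ∧ K ⊆ V ∧ Disjoint (closure V) S ∧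
      Disjoint (frontier ((Subtype.val ⁻¹' V) : Set (Sᶜ : Set Y)))
        ((Subtype.val ⁻¹' X) : Set (Sᶜ : Set Y)) := by
  have hSclosed : IsClosed S := hS.isClosed
  have hSc_open : IsOpen (Sᶜ : Set Y) := hSclosed.isOpen_compl
  -- closure X ⊆ X ∪ S
  obtain ⟨u, hu_closed, hu⟩ := isClosed_induced_iff.mp hXclosed
  have hXu : X ⊆ u := by
    intro z hz
    have : (⟨z, hXS hz⟩ : (Sᶜ : Set Y)) ∈ Subtype.val ⁻¹' u := by
      rw [hu]; exact hz
    exact this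
  have hclX : closure X ⊆ X ∪ S := by
    intro y hy
    by_cases hyS : y ∈ S
    · exact Or.inr hyS
    · left
      have hyu : y ∈ u := closure_minimal hXu hu_closed hy
      have : (⟨y, hyS⟩ : (Sᶜ : Set Y)) ∈ Subtype.val ⁻¹' X := by
        rw [← hu]; exact hyu
      exact this
  -- basic facts about K
  have hxK : x ∈ K := hK ▸ mem_connectedComponentIn hx
  have hKX : K ⊆ X := hK ▸ connectedComponentIn_subset X x
  have hKconn : IsConnected K := hK ▸ isConnected_connectedComponentIn_iff.mpr hx
  have hclKX : closure K ⊆ X := by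
    intro y hy
    rcases hclX (closure_mono hKX hy) with h | h
    · exact h
    · exact absurd h (Set.disjoint_left.mp hKS hy)
  have hKclosed : IsClosed K := by
    refine isClosed_of_closure_subset ?_
    nth_rewrite 2 [hK]
    exact hKconn.isPreconnected.closure.subset_connectedComponentIn
      (subset_closure hxK) hclKX
  -- an open set O with K ⊆ O and closure O ⊆ Sᶜ
  obtain ⟨O, hO_open, hKO, hclO⟩ :=
    normal_exists_closure_subset hKclosed hSc_open (fun y hy => hXS (hKX hy))
  -- the compact set N = X ∩ closure O, in which K is the component of x
  set N : Set Y := X ∩ closure O with hN_def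
  have hNX : N ⊆ X := Set.inter_subset_left
  have hN_eq : N = closure X ∩ closure O := by
    apply Set.Subset.antisymm
    · exact Set.inter_subset_inter_left _ subset_closure
    · rintro y ⟨hy1, hy2⟩
      rcases hclX hy1 with h | h
      · exact ⟨h, hy2⟩
      · exact absurd h (hclO hy2)
  have hNclosed : IsClosed N := hN_eq ▸ isClosed_closure.inter isClosed_closure
  have hNcomp : IsCompact N := hNclosed.isCompact
  have hKN : K ⊆ N := Set.subset_inter hKX (hKO.trans subset_closure)
  have hxN : x ∈ N := hKN hxK
  have hccN : connectedComponentIn N x = K := by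
    apply Set.Subset.antisymm
    · rw [hK]
      exact isPreconnected_connectedComponentIn.subset_connectedComponentIn
        (mem_connectedComponentIn hxN) ((connectedComponentIn_subset N x).trans hNX)
    · exact hKconn.isPreconnected.subset_connectedComponentIn hxK hKN
  -- work in the compact space ↥N
  haveI : CompactSpace N := isCompact_iff_compactSpace.mp hNcomp
  have hccsub : connectedComponent (⟨x, hxN⟩ : N) ⊆ Subtype.val ⁻¹' O := by
    intro z hz
    have : (z : Y) ∈ connectedComponentIn N x := by
      rw [connectedComponentIn_eq_image hxN]
      exact ⟨z, hz, rfl⟩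
    exact hKO (hccN ▸ this)
  obtain ⟨V', hV'clopen, hxV', hV'O⟩ :=
    exists_isClopen_subset_of_connectedComponent_subset
      (hO_open.preimage continuous_subtype_val) hccsub
  -- D = image of V' in Y
  set D : Set Y := Subtype.val '' V' with hD_def
  have hV'comp : IsCompact V' := hV'clopen.isClosed.isCompact
  have hDcomp : IsCompact D := hV'comp.image continuous_subtype_val
  have hDclosed : IsClosed D := hDcomp.isClosed
  have hKD : K ⊆ D := by
    rw [← hccN, connectedComponentIn_eq_image hxN]
    exact Set.image_mono (hV'clopen.connectedComponent_subset hxV')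
  have hDO : D ⊆ O := by rintro _ ⟨z, hz, rfl⟩; exact hV'O hz
  have hDN : D ⊆ N := by rintro _ ⟨z, hz, rfl⟩; exact z.2
  have hDX : D ⊆ X := hDN.trans hNX
  obtain ⟨O₂, hO₂open, hO₂⟩ := isOpen_induced_iff.mp hV'clopen.isOpen
  have hD_eq : D = (O₂ ∩ O) ∩ X := by
    ext y
    constructor
    · rintro ⟨z, hz, rfl⟩
      refine ⟨⟨?_, hV'O hz⟩, hDX ⟨z, hz, rfl⟩⟩
      have : z ∈ Subtype.val ⁻¹' O₂ := by rw [hO₂]; exact hz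
      exact this
    · rintro ⟨⟨hy2, hyO⟩, hyX⟩
      have hyN : y ∈ N := ⟨hyX, subset_closure hyO⟩
      refine ⟨⟨y, hyN⟩, ?_, rfl⟩
      have : (⟨y, hyN⟩ : N) ∈ Subtype.val ⁻¹' O₂ := hy2
      rwa [hO₂] at this
  have hXD_cl : Disjoint (closure (X \ D)) D := by
    rw [Set.disjoint_left]
    intro y hy hyD
    rw [hD_eq] at hyD
    obtain ⟨hyO', hyX⟩ := hyD
    obtain ⟨z, hzO, hzX, hzD⟩ := mem_closure_iff.mp hy _ (hO₂open.inter hO_open) hyO'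
    exact hzD (hD_eq ▸ ⟨hzO, hzX⟩)
  have hDS : Disjoint D S := by
    rw [Set.disjoint_left]
    intro y hy hyS
    exact hclO (subset_closure (hDO hy)) hyS
  -- final separation
  have hBclosed : IsClosed (closure (X \ D) ∪ S) := isClosed_closure.union hSclosed
  have hDB : D ⊆ (closure (X \ D) ∪ S)ᶜ := by
    intro y hy hB
    rcases hB with h | h
    · exact Set.disjoint_left.mp hXD_cl h hy
    · exact Set.disjoint_left.mp hDS hy h
  obtain ⟨V, hVopen, hDV, hclV⟩ :=
    normal_exists_closure_subset hDclosed hBclosed.isOpen_compl hDB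
  refine ⟨V, hVopen, hKD.trans hDV, ?_, ?_⟩
  · rw [Set.disjoint_left]
    intro y hy hyS
    exact hclV hy (Or.inr hyS)
  · rw [Set.disjoint_left]
    intro y hyF hyX
    have hVpre : IsOpen ((Subtype.val ⁻¹' V) : Set (Sᶜ : Set Y)) :=
      hVopen.preimage continuous_subtype_val
    have hynotV : y ∉ (Subtype.val ⁻¹' V : Set (Sᶜ : Set Y)) := by
      intro h
      exact hyF.2 (by rwa [hVpre.interior_eq])
    have hyclV : (y : Y) ∈ closure V :=
      (continuous_subtype_val.closure_preimage_subset V) hyF.1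
    have hyBc : (y : Y) ∈ (closure (X \ D) ∪ S)ᶜ := hclV hyclV
    have hyD : (y : Y) ∈ D := by
      by_contra hyD
      exact hyBc (Or.inl (subset_closure ⟨hyX, hyD⟩))
    exact hynotV (hDV hyD)
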